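/- Let 𝒫 be a partition of Ω and let μ̲ be a W-coherent lower probability on 𝒜_C(𝒫). Let C|D be a conditional event with C ∩ D ≠ ∅ and Cᶜ ∩ D ≠ ∅. Then a map ν on 𝒜_C(𝒫) ∪ {C|D} that agrees with μ̲ on 𝒜_C(𝒫) is a W-coherent lower probability if and only if μ̲((C|D)_*) ≤ ν(C|D) ≤ μ̲((C|D)^*). -/

import Mathlib

open Set

/-- Real-valued indicator function of a set. -/
noncomputable def ind {Ω : Type*} (B : Set Ω) : Ω → ℝ := B.indicator 1

/-- A bounded gamble. -/
def Bdd {Ω : Type*} (X : Ω → ℝ) : Prop := BddAbove (Set.range X) ∧ BddBelow (Set.range X)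

/-- `S` is a set of conditional gambles: each pair has nonempty conditioning event and
bounded gamble. -/
def IsCondGambleSet {Ω : Type*} (S : Set ((Ω → ℝ) × Set Ω)) : Prop :=
  ∀ p ∈ S, p.2.Nonempty ∧ Bdd p.1

/-- `S` is a set of conditional events: each member is an indicator gamble conditional on a
nonempty event. -/
def IsCondEventSet {Ω : Type*} (S : Set ((Ω → ℝ) × Set Ω)) : Prop :=
  ∀ p ∈ S, ∃ A B : Set Ω, B.Nonempty ∧ p = (ind A, B)

/-- The term `1_B · (X − P(X|B))` appearing in betting gains. -/
noncomputable def gainTerm {Ω : Type*} (P : (Ω → ℝ) × Set Ω → ℝ) (X : Ω → ℝ) (B : Set Ω) :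
    Ω → ℝ :=
  B.indicator (fun ω => X ω - P (X, B))

/-- Convex conditional lower prevision on `S`. -/
def IsConvexLP {Ω : Type*} (S : Set ((Ω → ℝ) × Set Ω)) (P : (Ω → ℝ) × Set Ω → ℝ) : Prop :=
  ∀ n : ℕ, 1 ≤ n → ∀ (X0 : Ω → ℝ) (B0 : Set Ω) (X : Fin n → Ω → ℝ) (Bs : Fin n → Set Ω)
    (s0 : ℝ) (s : Fin n → ℝ),
    (X0, B0) ∈ S → (∀ i, (X i, Bs i) ∈ S) → (∀ i, 0 ≤ s i) → (∑ i, s i) = s0 → 0 < s0 →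
    0 ≤ sSup ((fun ω => (∑ i, s i * gainTerm P (X i) (Bs i) ω) - s0 * gainTerm P X0 B0 ω)
        '' (B0 ∪ ⋃ i, Bs i))

/-- Centered convex (C-convex) conditional lower prevision on `S`. -/
def IsCConvexLP {Ω : Type*} (S : Set ((Ω → ℝ) × Set Ω)) (P : (Ω → ℝ) × Set Ω → ℝ) : Prop :=
  IsConvexLP S P ∧
    ∀ (X : Ω → ℝ) (B : Set Ω), (X, B) ∈ S →
      ((fun _ => (0 : ℝ)), B) ∈ S ∧ P ((fun _ => (0 : ℝ)), B) = 0

/-- 1-convex conditional lower prevision on `S`. -/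
def Is1ConvexLP {Ω : Type*} (S : Set ((Ω → ℝ) × Set Ω)) (P : (Ω → ℝ) × Set Ω → ℝ) : Prop :=
  ∀ (X0 X1 : Ω → ℝ) (B0 B1 : Set Ω) (t : ℝ),
    (X0, B0) ∈ S → (X1, B1) ∈ S → 0 < t →
    0 ≤ sSup ((fun ω => t * gainTerm P X1 B1 ω - t * gainTerm P X0 B0 ω) '' (B0 ∪ B1))

/-- Centered 1-convex conditional lower prevision on `S`. -/
def IsC1ConvexLP {Ω : Type*} (S : Set ((Ω → ℝ) × Set Ω)) (P : (Ω → ℝ) × Set Ω → ℝ) : Prop :=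
  Is1ConvexLP S P ∧
    ∀ (X : Ω → ℝ) (B : Set Ω), (X, B) ∈ S →
      ((fun _ => (0 : ℝ)), B) ∈ S ∧ P ((fun _ => (0 : ℝ)), B) = 0

/-- Williams-coherent conditional lower prevision on `S`. -/
def IsWCoherent {Ω : Type*} (S : Set ((Ω → ℝ) × Set Ω)) (P : (Ω → ℝ) × Set Ω → ℝ) : Prop :=
  ∀ (n : ℕ) (X0 : Ω → ℝ) (B0 : Set Ω) (X : Fin n → Ω → ℝ) (Bs : Fin n → Set Ω)
    (s0 : ℝ) (s : Fin n → ℝ),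
    (X0, B0) ∈ S → (∀ i, (X i, Bs i) ∈ S) → 0 ≤ s0 → (∀ i, 0 ≤ s i) →
    0 ≤ sSup ((fun ω => (∑ i, s i * gainTerm P (X i) (Bs i) ω) - s0 * gainTerm P X0 B0 ω)
        '' (B0 ∪ ⋃ i, Bs i))

/-- de Finetti-coherent conditional prevision on `S`. -/
def IsdFCoherent {Ω : Type*} (S : Set ((Ω → ℝ) × Set Ω)) (P : (Ω → ℝ) × Set Ω → ℝ) : Prop :=
  ∀ (n : ℕ), 1 ≤ n → ∀ (X : Fin n → Ω → ℝ) (Bs : Fin n → Set Ω) (s : Fin n → ℝ),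
    (∀ i, (X i, Bs i) ∈ S) →
    0 ≤ sSup ((fun ω => ∑ i, s i * gainTerm P (X i) (Bs i) ω) '' (⋃ i, Bs i))

/-- Goodman–Nguyen relation on conditional events: `A|B ≤GN C|D`. -/
def GNe {Ω : Type*} (A B C D : Set Ω) : Prop :=
  A ∩ B ⊆ C ∩ D ∧ Cᶜ ∩ D ⊆ Aᶜ ∩ B

/-- Goodman–Nguyen relation on conditional gambles: `X|B ≤GN Y|D`. -/
def GNg {Ω : Type*} (X : Ω → ℝ) (B : Set Ω) (Y : Ω → ℝ) (D : Set Ω) : Prop :=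
  ∀ ω : Ω, ind B ω * X ω + ind (Bᶜ ∩ D) ω * sSup (X '' B)
    ≤ ind D ω * Y ω + ind (B ∩ Dᶜ) ω * sInf (Y '' D)

/-- `pt` is a partition of `Ω`. -/
def IsPartition {Ω : Type*} (pt : Set (Set Ω)) : Prop :=
  (∀ e ∈ pt, e.Nonempty) ∧ (∀ e ∈ pt, ∀ f ∈ pt, e ≠ f → e ∩ f = ∅) ∧ ⋃₀ pt = Set.univ

/-- `E` is logically dependent on the partition `pt` (a union of its atoms). -/
def memA {Ω : Type*} (pt : Set (Set Ω)) (E : Set Ω) : Prop := ∃ T ⊆ pt, E = ⋃₀ T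

/-- Inner event `E_*` w.r.t. partition `pt`. -/
def innerE {Ω : Type*} (pt : Set (Set Ω)) (E : Set Ω) : Set Ω := ⋃₀ {e ∈ pt | e ⊆ E}

/-- Outer event `E^*` w.r.t. partition `pt`. -/
def outerE {Ω : Type*} (pt : Set (Set Ω)) (E : Set Ω) : Set Ω := ⋃₀ {e ∈ pt | (e ∩ E).Nonempty}

/-- `𝒜_C(pt)`, as a set of conditional (indicator) gambles. -/
def AC {Ω : Type*} (pt : Set (Set Ω)) : Set ((Ω → ℝ) × Set Ω) :=
  {p | ∃ A B : Set Ω, memA pt A ∧ memA pt B ∧ B.Nonempty ∧ p = (ind A, B)}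

/-- The inner conditional event `(C|D)_*`, as a conditional indicator gamble. -/
noncomputable def innerCE {Ω : Type*} (pt : Set (Set Ω)) (C D : Set Ω) : (Ω → ℝ) × Set Ω :=
  (ind (innerE pt (C ∩ D)), innerE pt (C ∩ D) ∪ outerE pt (Cᶜ ∩ D))

/-- The outer conditional event `(C|D)^*`, as a conditional indicator gamble. -/
noncomputable def outerCE {Ω : Type*} (pt : Set (Set Ω)) (C D : Set Ω) : (Ω → ℝ) × Set Ω :=
  (ind (outerE pt (C ∩ D)), outerE pt (C ∩ D) ∪ innerE pt (Cᶜ ∩ D))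
open scoped Classical

section Helpers

variable {Ω : Type*}

lemma ind_apply (A : Set Ω) (ω : Ω) : ind A ω = if ω ∈ A then 1 else 0 := by
  classical simp [ind, Set.indicator_apply]

lemma gainTerm_apply (P : (Ω → ℝ) × Set Ω → ℝ) (X : Ω → ℝ) (B : Set Ω) (ω : Ω) :
    gainTerm P X B ω = if ω ∈ B then X ω - P (X, B) else 0 := by
  simp [gainTerm, Set.indicator_apply]

lemma gainTerm_congr {P Q : (Ω → ℝ) × Set Ω → ℝ} {X : Ω → ℝ} {B : Set Ω}
    (h : P (X, B) = Q (X, B)) : gainTerm P X B = gainTerm Q X B := by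
  unfold gainTerm; rw [h]

lemma abs_gainTerm_le (P : (Ω → ℝ) × Set Ω → ℝ) {X : Ω → ℝ} (B : Set Ω)
    (hX : ∃ A, X = ind A) (ω : Ω) : |gainTerm P X B ω| ≤ 1 + |P (X, B)| := by
  obtain ⟨A, rfl⟩ := hX
  rw [gainTerm_apply]
  have h0 : (0:ℝ) ≤ ind A ω := by rw [ind_apply]; split <;> norm_num
  have h1 : ind A ω ≤ 1 := by rw [ind_apply]; split <;> norm_num
  split
  · calc |ind A ω - P (ind A, B)| ≤ |ind A ω| + |P (ind A, B)| := abs_sub _ _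
      _ ≤ 1 + |P (ind A, B)| := by
        have : |ind A ω| = ind A ω := abs_of_nonneg h0
        linarith
  · simp; positivity

lemma atom_exists {pt : Set (Set Ω)} (hpt : IsPartition pt) (ω : Ω) : ∃ e ∈ pt, ω ∈ e := by
  have := hpt.2.2
  have hω : ω ∈ ⋃₀ pt := by rw [this]; trivial
  exact hω

lemma atom_eq {pt : Set (Set Ω)} (hpt : IsPartition pt) {e f : Set Ω} (he : e ∈ pt)
    (hf : f ∈ pt) {ω : Ω} (hωe : ω ∈ e) (hωf : ω ∈ f) : e = f := by
  by_contra h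
  have := hpt.2.1 e he f hf h
  exact absurd (Set.mem_inter hωe hωf) (by rw [this]; exact notMem_empty ω)

lemma memA_mem_congr {pt : Set (Set Ω)} (hpt : IsPartition pt) {E : Set Ω} (hE : memA pt E)
    {e : Set Ω} (he : e ∈ pt) {ω ω' : Ω} (hωe : ω ∈ e) (hω'e : ω' ∈ e) (hωE : ω ∈ E) :
    ω' ∈ E := by
  obtain ⟨T, hT, rfl⟩ := hE
  obtain ⟨f, hfT, hωf⟩ := hωE
  exact ⟨f, hfT, (atom_eq hpt he (hT hfT) hωe hωf) ▸ hω'e⟩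

lemma mem_outerE_iff {pt : Set (Set Ω)} (hpt : IsPartition pt) {e : Set Ω} (he : e ∈ pt)
    {ω : Ω} (hω : ω ∈ e) (E : Set Ω) : ω ∈ outerE pt E ↔ (e ∩ E).Nonempty := by
  constructor
  · rintro ⟨f, ⟨hf, hfE⟩, hωf⟩
    rwa [atom_eq hpt he hf hω hωf]
  · intro h; exact ⟨e, ⟨he, h⟩, hω⟩

lemma mem_innerE_iff {pt : Set (Set Ω)} (hpt : IsPartition pt) {e : Set Ω} (he : e ∈ pt)
    {ω : Ω} (hω : ω ∈ e) (E : Set Ω) : ω ∈ innerE pt E ↔ e ⊆ E := by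
  constructor
  · rintro ⟨f, ⟨hf, hfE⟩, hωf⟩
    rwa [atom_eq hpt he hf hω hωf]
  · intro h; exact ⟨e, ⟨he, h⟩, hω⟩

lemma subset_outerE {pt : Set (Set Ω)} (hpt : IsPartition pt) (E : Set Ω) :
    E ⊆ outerE pt E := by
  intro ω hω
  obtain ⟨e, he, hωe⟩ := atom_exists hpt ω
  exact ⟨e, ⟨he, ⟨ω, hωe, hω⟩⟩, hωe⟩

lemma innerE_subset (pt : Set (Set Ω)) (E : Set Ω) : innerE pt E ⊆ E := by
  rintro ω ⟨f, ⟨hf, hsub⟩, hωf⟩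
  exact hsub hωf

lemma memA_innerE (pt : Set (Set Ω)) (E : Set Ω) : memA pt (innerE pt E) :=
  ⟨{e ∈ pt | e ⊆ E}, fun f hf => hf.1, rfl⟩

lemma memA_outerE (pt : Set (Set Ω)) (E : Set Ω) : memA pt (outerE pt E) :=
  ⟨{e ∈ pt | (e ∩ E).Nonempty}, fun f hf => hf.1, rfl⟩

lemma memA_union {pt : Set (Set Ω)} {A B : Set Ω} (hA : memA pt A) (hB : memA pt B) :
    memA pt (A ∪ B) := by
  obtain ⟨T, hT, rfl⟩ := hA
  obtain ⟨T', hT', rfl⟩ := hB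
  exact ⟨T ∪ T', Set.union_subset hT hT', (Set.sUnion_union T T').symm⟩

lemma gainTerm_atom_congr {pt : Set (Set Ω)} (hpt : IsPartition pt)
    (P : (Ω → ℝ) × Set Ω → ℝ) {A B : Set Ω} (hA : memA pt A) (hB : memA pt B)
    {e : Set Ω} (he : e ∈ pt) {ω ω' : Ω} (hω : ω ∈ e) (hω' : ω' ∈ e) :
    gainTerm P (ind A) B ω = gainTerm P (ind A) B ω' := by
  have hBiff : ω ∈ B ↔ ω' ∈ B :=
    ⟨memA_mem_congr hpt hB he hω hω', memA_mem_congr hpt hB he hω' hω⟩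
  have hAiff : ω ∈ A ↔ ω' ∈ A :=
    ⟨memA_mem_congr hpt hA he hω hω', memA_mem_congr hpt hA he hω' hω⟩
  rw [gainTerm_apply, gainTerm_apply, ind_apply, ind_apply]
  by_cases h1 : ω ∈ B <;> by_cases h2 : ω ∈ A <;>
    simp [h1, h2, hBiff.mp, hAiff.mp, (not_iff_not.mpr hBiff).mp, (not_iff_not.mpr hAiff).mp] <;>
    simp_all

lemma nonneg_of_sSup {f : Ω → ℝ} {U : Set Ω} {m : ℝ} (hne : U.Nonempty)
    (hb : ∀ ω ∈ U, f ω ≤ m) (h : 0 ≤ sSup (f '' U)) : 0 ≤ m :=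
  le_trans h (csSup_le (hne.image f) (by rintro y ⟨ω, hω, rfl⟩; exact hb ω hω))

end Helpers
section Coh

variable {Ω : Type*}

lemma WCoh_nonneg {S : Set ((Ω → ℝ) × Set Ω)} {P : (Ω → ℝ) × Set Ω → ℝ}
    (h : IsWCoherent S P) {A B : Set Ω} (hm : (ind A, B) ∈ S) (hB : B.Nonempty) :
    0 ≤ P (ind A, B) := by
  have hc := h 0 (ind A) B (fun i => i.elim0) (fun i => i.elim0) 1 (fun i => i.elim0)
    hm (fun i => i.elim0) zero_le_one (fun i => i.elim0)
  refine nonneg_of_sSup (m := P (ind A, B)) (by simpa using hB) ?_ hc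
  intro ω hω
  have hωB : ω ∈ B := by simpa using hω
  simp only [Finset.univ_eq_empty, Finset.sum_empty, one_mul, zero_sub]
  rw [gainTerm_apply, if_pos hωB]
  have h0 : (0:ℝ) ≤ ind A ω := by rw [ind_apply]; split <;> norm_num
  linarith

lemma WCoh_le_one {S : Set ((Ω → ℝ) × Set Ω)} {P : (Ω → ℝ) × Set Ω → ℝ}
    (h : IsWCoherent S P) {A B : Set Ω} (hm : (ind A, B) ∈ S) (hB : B.Nonempty) :
    P (ind A, B) ≤ 1 := by
  have hc := h 1 (ind A) B (fun _ => ind A) (fun _ => B) 0 (fun _ => 1)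
    hm (fun _ => hm) le_rfl (fun _ => zero_le_one)
  have hU : (B ∪ ⋃ _ : Fin 1, B) = B := by simp
  rw [hU] at hc
  have := nonneg_of_sSup (m := 1 - P (ind A, B)) hB ?_ hc
  · linarith
  intro ω hω
  simp only [Fin.sum_univ_one, one_mul, zero_mul, sub_zero]
  rw [gainTerm_apply, if_pos hω, ind_apply]
  split <;> linarith

lemma WCoh_mono {S : Set ((Ω → ℝ) × Set Ω)} {P : (Ω → ℝ) × Set Ω → ℝ}
    (h : IsWCoherent S P) {A B C' D' : Set Ω} (hA : (ind A, B) ∈ S) (hC : (ind C', D') ∈ S)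
    (hB : B.Nonempty) (hsub1 : A ∩ B ⊆ C' ∩ D') (hsub2 : C'ᶜ ∩ D' ⊆ Aᶜ ∩ B)
    (hc0 : 0 ≤ P (ind C', D')) (ha1 : P (ind A, B) ≤ 1) :
    P (ind A, B) ≤ P (ind C', D') := by
  have hc := h 1 (ind C') D' (fun _ => ind A) (fun _ => B) 1 (fun _ => 1)
    hC (fun _ => hA) zero_le_one (fun _ => zero_le_one)
  have hU : (D' ∪ ⋃ _ : Fin 1, B) = D' ∪ B := by rw [Set.iUnion_const]
  rw [hU] at hc
  have := nonneg_of_sSup (m := P (ind C', D') - P (ind A, B))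
    (hB.mono Set.subset_union_right) ?_ hc
  · linarith
  intro ω hω
  simp only [Fin.sum_univ_one, one_mul]
  rw [gainTerm_apply, gainTerm_apply, ind_apply, ind_apply]
  set a := P (ind A, B) with ha
  set c := P (ind C', D') with hcdef
  by_cases hwB : ω ∈ B
  · rw [if_pos hwB]
    by_cases hwA : ω ∈ A
    · obtain ⟨hwC, hwD⟩ := hsub1 ⟨hwA, hwB⟩
      rw [if_pos hwA, if_pos hwD, if_pos hwC]; linarith
    · rw [if_neg hwA]
      by_cases hwD : ω ∈ D'
      · by_cases hwC : ω ∈ C'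
        · rw [if_pos hwD, if_pos hwC]; linarith
        · rw [if_pos hwD, if_neg hwC]; linarith
      · rw [if_neg hwD]; linarith
  · rw [if_neg hwB]
    have hwD : ω ∈ D' := ((Set.mem_union ω D' B).mp hω).resolve_right hwB
    have hwC : ω ∈ C' := by
      by_contra hx
      exact hwB (hsub2 ⟨hx, hwD⟩).2
    rw [if_pos hwD, if_pos hwC]; linarith

end Coh
section Key

variable {Ω : Type*}

lemma key_outer {pt : Set (Set Ω)} (hpt : IsPartition pt) (C D : Set Ω) {x c : ℝ}
    (hxc : x ≤ c) {e : Set Ω} (he : e ∈ pt) {ω' : Ω} (hω' : ω' ∈ e) :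
    ∃ ω ∈ e, (ω ∈ D ∨ ω' ∉ outerE pt (C ∩ D) ∪ innerE pt (Cᶜ ∩ D)) ∧
      (if ω' ∈ outerE pt (C ∩ D) ∪ innerE pt (Cᶜ ∩ D) then ind (outerE pt (C ∩ D)) ω' - c else 0)
        ≤ (if ω ∈ D then ind C ω - x else 0) := by
  by_cases h1 : ω' ∈ outerE pt (C ∩ D)
  · obtain ⟨ω, hωe, hωC, hωD⟩ := (mem_outerE_iff hpt he hω' (C ∩ D)).mp h1
    refine ⟨ω, hωe, Or.inl hωD, ?_⟩
    rw [if_pos (Set.mem_union_left _ h1), if_pos hωD, ind_apply, ind_apply, if_pos h1, if_pos hωC]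
    linarith
  · by_cases h2 : ω' ∈ innerE pt (Cᶜ ∩ D)
    · have hsub : e ⊆ Cᶜ ∩ D := (mem_innerE_iff hpt he hω' (Cᶜ ∩ D)).mp h2
      obtain ⟨hωC, hωD⟩ := hsub hω'
      refine ⟨ω', hω', Or.inl hωD, ?_⟩
      rw [if_pos (Set.mem_union_right _ h2), if_pos hωD, ind_apply, ind_apply, if_neg h1, if_neg hωC]
      linarith
    · have hnu : ω' ∉ outerE pt (C ∩ D) ∪ innerE pt (Cᶜ ∩ D) := by
        rintro (h | h) <;> [exact h1 h; exact h2 h]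
      have hDc : ∃ ω ∈ e, ω ∉ D := by
        by_contra hx
        push_neg at hx
        by_cases hC : ∃ p ∈ e, p ∈ C
        · obtain ⟨p, hpe, hpC⟩ := hC
          exact h1 ((mem_outerE_iff hpt he hω' (C ∩ D)).mpr ⟨p, hpe, hpC, hx p hpe⟩)
        · push_neg at hC
          exact h2 ((mem_innerE_iff hpt he hω' (Cᶜ ∩ D)).mpr
            (fun p hpe => ⟨hC p hpe, hx p hpe⟩))
      obtain ⟨ω, hωe, hωD⟩ := hDc
      exact ⟨ω, hωe, Or.inr hnu, by rw [if_neg hnu, if_neg hωD]⟩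

lemma key_inner {pt : Set (Set Ω)} (hpt : IsPartition pt) (C D : Set Ω) {x a : ℝ}
    (hax : a ≤ x) {e : Set Ω} (he : e ∈ pt) {ω' : Ω} (hω' : ω' ∈ e) :
    ∃ ω ∈ e, (ω ∈ D ∨ ω' ∉ innerE pt (C ∩ D) ∪ outerE pt (Cᶜ ∩ D)) ∧
      (if ω ∈ D then ind C ω - x else 0)
        ≤ (if ω' ∈ innerE pt (C ∩ D) ∪ outerE pt (Cᶜ ∩ D) then ind (innerE pt (C ∩ D)) ω' - a
            else 0) := by
  by_cases h1 : ω' ∈ innerE pt (C ∩ D)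
  · have hsub : e ⊆ C ∩ D := (mem_innerE_iff hpt he hω' (C ∩ D)).mp h1
    obtain ⟨hωC, hωD⟩ := hsub hω'
    refine ⟨ω', hω', Or.inl hωD, ?_⟩
    rw [if_pos (Set.mem_union_left _ h1), if_pos hωD, ind_apply, ind_apply, if_pos h1, if_pos hωC]
    linarith
  · by_cases h2 : ω' ∈ outerE pt (Cᶜ ∩ D)
    · obtain ⟨ω, hωe, hωC, hωD⟩ := (mem_outerE_iff hpt he hω' (Cᶜ ∩ D)).mp h2
      refine ⟨ω, hωe, Or.inl hωD, ?_⟩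
      rw [if_pos (Set.mem_union_right _ h2), if_pos hωD, ind_apply, ind_apply, if_neg h1, if_neg hωC]
      linarith
    · have hnu : ω' ∉ innerE pt (C ∩ D) ∪ outerE pt (Cᶜ ∩ D) := by
        rintro (h | h) <;> [exact h1 h; exact h2 h]
      have hDc : ∃ ω ∈ e, ω ∉ D := by
        by_contra hx
        push_neg at hx
        by_cases hC : ∃ p ∈ e, p ∈ Cᶜ
        · obtain ⟨p, hpe, hpC⟩ := hC
          exact h2 ((mem_outerE_iff hpt he hω' (Cᶜ ∩ D)).mpr ⟨p, hpe, hpC, hx p hpe⟩)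
        · push_neg at hC
          have : e ⊆ C ∩ D := fun p hpe => ⟨not_not.mp (hC p hpe), hx p hpe⟩
          exact h1 ((mem_innerE_iff hpt he hω' (C ∩ D)).mpr this)
      obtain ⟨ω, hωe, hωD⟩ := hDc
      exact ⟨ω, hωe, Or.inr hnu, by rw [if_neg hnu, if_neg hωD]⟩

end Key
section MainAux

variable {Ω : Type*}

lemma main_aux {pt : Set (Set Ω)} (hpt : IsPartition pt) (μ ν : (Ω → ℝ) × Set Ω → ℝ)
    (hμ : IsWCoherent (AC pt) μ) (C D : Set Ω) (hD : D.Nonempty)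
    (hag : ∀ p ∈ AC pt, ν p = μ p)
    (Y BY : Set Ω) (hY : (ind Y, BY) ∈ AC pt)
    (n : ℕ) (X0 : Ω → ℝ) (B0 : Set Ω) (X : Fin n → Ω → ℝ) (Bs : Fin n → Set Ω)
    (s0 : ℝ) (s : Fin n → ℝ)
    (hX0 : (X0, B0) ∈ AC pt ∪ {(ind C, D)}) (hXs : ∀ i, (X i, Bs i) ∈ AC pt ∪ {(ind C, D)})
    (hs0 : 0 ≤ s0) (hs : ∀ i, 0 ≤ s i)
    (key : ∀ e ∈ pt, ∀ ω' ∈ e, ∃ ω ∈ e, (ω ∈ D ∨ ω' ∉ BY) ∧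
      ((∑ i, if (X i, Bs i) = (ind C, D) then s i else 0) -
          (if (X0, B0) = (ind C, D) then s0 else 0)) *
        (gainTerm μ (ind Y) BY ω' - gainTerm ν (ind C) D ω) ≤ 0) :
    0 ≤ sSup ((fun ω => (∑ i, s i * gainTerm ν (X i) (Bs i) ω) - s0 * gainTerm ν X0 B0 ω)
        '' (B0 ∪ ⋃ i, Bs i)) := by
  classical
  -- nonspecial pairs are in AC pt
  have hmemAC : ∀ p : (Ω → ℝ) × Set Ω, p ∈ AC pt ∪ {(ind C, D)} → p ≠ (ind C, D) →
      p ∈ AC pt := by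
    rintro p (hp | hp) hne
    · exact hp
    · exact absurd hp hne
  -- the replaced instance
  set X' : Fin n → Ω → ℝ := fun i => if (X i, Bs i) = (ind C, D) then ind Y else X i with hX'
  set Bs' : Fin n → Set Ω := fun i => if (X i, Bs i) = (ind C, D) then BY else Bs i with hBs'
  set X0' : Ω → ℝ := if (X0, B0) = (ind C, D) then ind Y else X0 with hX0'
  set B0' : Set Ω := if (X0, B0) = (ind C, D) then BY else B0 with hB0'
  have hXs' : ∀ i, (X' i, Bs' i) ∈ AC pt := by
    intro i
    by_cases h : (X i, Bs i) = (ind C, D)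
    · simp only [hX', hBs', if_pos h]; exact hY
    · simp only [hX', hBs', if_neg h]; exact hmemAC _ (hXs i) h
  have hX0'' : (X0', B0') ∈ AC pt := by
    by_cases h : (X0, B0) = (ind C, D)
    · simp only [hX0', hB0', if_pos h]; exact hY
    · simp only [hX0', hB0', if_neg h]; exact hmemAC _ hX0 h
  have hco := hμ n X0' B0' X' Bs' s0 s hX0'' hXs' hs0 hs
  set G : Ω → ℝ := fun ω => (∑ i, s i * gainTerm ν (X i) (Bs i) ω) - s0 * gainTerm ν X0 B0 ω
    with hG
  set G' : Ω → ℝ := fun ω => (∑ i, s i * gainTerm μ (X' i) (Bs' i) ω) -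
      s0 * gainTerm μ X0' B0' ω with hG'
  set E : Set Ω := B0 ∪ ⋃ i, Bs i with hE
  set E' : Set Ω := B0' ∪ ⋃ i, Bs' i with hE'
  -- indicator forms
  have hXind : ∀ i, ∃ A, X i = ind A := by
    intro i
    rcases hXs i with h | h
    · obtain ⟨A, B, _, _, _, heq⟩ := h
      exact ⟨A, congrArg Prod.fst heq⟩
    · exact ⟨C, congrArg Prod.fst h⟩
  have hX0ind : ∃ A, X0 = ind A := by
    rcases hX0 with h | h
    · obtain ⟨A, B, _, _, _, heq⟩ := h
      exact ⟨A, congrArg Prod.fst heq⟩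
    · exact ⟨C, congrArg Prod.fst h⟩
  -- bound on G
  set M : ℝ := (∑ i, s i * (1 + |ν (X i, Bs i)|)) + s0 * (1 + |ν (X0, B0)|) with hM
  have hGle : ∀ ω, G ω ≤ M := by
    intro ω
    have h1 : (∑ i, s i * gainTerm ν (X i) (Bs i) ω) ≤ ∑ i, s i * (1 + |ν (X i, Bs i)|) := by
      apply Finset.sum_le_sum
      intro i _
      exact mul_le_mul_of_nonneg_left
        (le_trans (le_abs_self _) (abs_gainTerm_le ν (Bs i) (hXind i) ω)) (hs i)
    have h2 : -(s0 * gainTerm ν X0 B0 ω) ≤ s0 * (1 + |ν (X0, B0)|) := by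
      rw [← mul_neg]
      exact mul_le_mul_of_nonneg_left
        (le_trans (neg_le_abs _) (abs_gainTerm_le ν B0 hX0ind ω)) hs0
    simp only [hG]
    linarith
  have hbddG : BddAbove (G '' E) := by
    refine ⟨M, ?_⟩
    rintro y ⟨ω, _, rfl⟩
    exact hGle ω
  -- nonemptiness of E'
  have hBYne : BY.Nonempty := by
    obtain ⟨A, B, _, _, hne, heq⟩ := hY
    have : BY = B := congrArg Prod.snd heq
    rwa [this]
  have hB0ne : B0.Nonempty := by
    rcases hX0 with h | h
    · obtain ⟨A, B, _, _, hne, heq⟩ := h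
      have : B0 = B := congrArg Prod.snd heq
      rwa [this]
    · have : B0 = D := congrArg Prod.snd h
      rwa [this]
  have hE'ne : E'.Nonempty := by
    refine Set.Nonempty.mono Set.subset_union_left ?_
    by_cases h : (X0, B0) = (ind C, D)
    · rw [hB0', if_pos h]; exact hBYne
    · rw [hB0', if_neg h]; exact hB0ne
  refine le_trans hco ?_
  apply csSup_le (hE'ne.image G')
  rintro y ⟨ω', hω'E, rfl⟩
  obtain ⟨e, he, hω'e⟩ := atom_exists hpt ω'
  obtain ⟨ω, hωe, hor, hkey⟩ := key e he ω' hω'e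
  -- ω ∈ E
  have hωE : ω ∈ E := by
    rcases hor with hωD | hnBY
    · by_cases hb0 : (X0, B0) = (ind C, D)
      · have : B0 = D := congrArg Prod.snd hb0
        exact Set.mem_union_left _ (this ▸ hωD)
      · by_cases hex : ∃ i, (X i, Bs i) = (ind C, D)
        · obtain ⟨i, hi⟩ := hex
          have : Bs i = D := congrArg Prod.snd hi
          exact Set.mem_union_right _ (Set.mem_iUnion.mpr ⟨i, this ▸ hωD⟩)
        · -- no special at all : use ω' 's component
          push_neg at hex
          rcases hω'E with hω'B0 | hω'U
          · rw [hB0', if_neg hb0] at hω'B0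
            obtain ⟨A, B, _, hmB, _, heq⟩ := hmemAC _ hX0 hb0
            have hBeq : B0 = B := congrArg Prod.snd heq
            exact Set.mem_union_left _
              (memA_mem_congr hpt (hBeq ▸ hmB) he hω'e hωe hω'B0)
          · obtain ⟨i, hω'Bi⟩ := Set.mem_iUnion.mp hω'U
            rw [hBs'] at hω'Bi
            simp only [if_neg (hex i)] at hω'Bi
            obtain ⟨A, B, _, hmB, _, heq⟩ := hmemAC _ (hXs i) (hex i)
            have hBeq : Bs i = B := congrArg Prod.snd heq
            exact Set.mem_union_right _ (Set.mem_iUnion.mpr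
              ⟨i, memA_mem_congr hpt (hBeq ▸ hmB) he hω'e hωe hω'Bi⟩)
    · rcases hω'E with hω'B0 | hω'U
      · have hb0 : (X0, B0) ≠ (ind C, D) := by
          intro h
          rw [hB0', if_pos h] at hω'B0
          exact hnBY hω'B0
        rw [hB0', if_neg hb0] at hω'B0
        obtain ⟨A, B, _, hmB, _, heq⟩ := hmemAC _ hX0 hb0
        have hBeq : B0 = B := congrArg Prod.snd heq
        exact Set.mem_union_left _ (memA_mem_congr hpt (hBeq ▸ hmB) he hω'e hωe hω'B0)
      · obtain ⟨i, hω'Bi⟩ := Set.mem_iUnion.mp hω'U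
        have hbi : (X i, Bs i) ≠ (ind C, D) := by
          intro h
          rw [hBs'] at hω'Bi
          simp only [if_pos h] at hω'Bi
          exact hnBY hω'Bi
        rw [hBs'] at hω'Bi
        simp only [if_neg hbi] at hω'Bi
        obtain ⟨A, B, _, hmB, _, heq⟩ := hmemAC _ (hXs i) hbi
        have hBeq : Bs i = B := congrArg Prod.snd heq
        exact Set.mem_union_right _ (Set.mem_iUnion.mpr
          ⟨i, memA_mem_congr hpt (hBeq ▸ hmB) he hω'e hωe hω'Bi⟩)
  -- G' ω' ≤ G ω
  have hterm : ∀ i, s i * gainTerm μ (X' i) (Bs' i) ω' =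
      s i * gainTerm ν (X i) (Bs i) ω +
        (if (X i, Bs i) = (ind C, D) then s i else 0) *
          (gainTerm μ (ind Y) BY ω' - gainTerm ν (ind C) D ω) := by
    intro i
    by_cases h : (X i, Bs i) = (ind C, D)
    · have hXi : X i = ind C := congrArg Prod.fst h
      have hBi : Bs i = D := congrArg Prod.snd h
      simp only [hX', hBs', if_pos h, hXi, hBi, eq_self_iff_true, if_true]
      ring
    · simp only [hX', hBs', if_neg h]
      obtain ⟨A, B, hmA, hmB, _, heq⟩ := hmemAC _ (hXs i) h
      have hXi : X i = ind A := congrArg Prod.fst heq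
      have hBi : Bs i = B := congrArg Prod.snd heq
      have hgt : gainTerm μ (X i) (Bs i) ω' = gainTerm ν (X i) (Bs i) ω := by
        have h1 : gainTerm μ (X i) (Bs i) = gainTerm ν (X i) (Bs i) :=
          gainTerm_congr (hag _ (hmemAC _ (hXs i) h)).symm
        rw [h1, hXi, hBi]
        exact (gainTerm_atom_congr hpt ν hmA hmB he hωe hω'e).symm
      rw [hgt]
      ring
  have hterm0 : s0 * gainTerm μ X0' B0' ω' =
      s0 * gainTerm ν X0 B0 ω +
        (if (X0, B0) = (ind C, D) then s0 else 0) *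
          (gainTerm μ (ind Y) BY ω' - gainTerm ν (ind C) D ω) := by
    by_cases h : (X0, B0) = (ind C, D)
    · have hX0e : X0 = ind C := congrArg Prod.fst h
      have hB0e : B0 = D := congrArg Prod.snd h
      simp only [hX0', hB0', if_pos h, hX0e, hB0e, eq_self_iff_true, if_true]
      ring
    · simp only [hX0', hB0', if_neg h]
      obtain ⟨A, B, hmA, hmB, _, heq⟩ := hmemAC _ hX0 h
      have hX0e : X0 = ind A := congrArg Prod.fst heq
      have hB0e : B0 = B := congrArg Prod.snd heq
      have hgt : gainTerm μ X0 B0 ω' = gainTerm ν X0 B0 ω := by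
        have h1 : gainTerm μ X0 B0 = gainTerm ν X0 B0 := gainTerm_congr (hag _ (hmemAC _ hX0 h)).symm
        rw [h1, hX0e, hB0e]
        exact (gainTerm_atom_congr hpt ν hmA hmB he hωe hω'e).symm
      rw [hgt]
      ring
  have hGG : G' ω' ≤ G ω := by
    have hsum : (∑ i, s i * gainTerm μ (X' i) (Bs' i) ω') =
        (∑ i, s i * gainTerm ν (X i) (Bs i) ω) +
          (∑ i, if (X i, Bs i) = (ind C, D) then s i else 0) *
            (gainTerm μ (ind Y) BY ω' - gainTerm ν (ind C) D ω) := by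
      rw [Finset.sum_congr rfl (fun i _ => hterm i), Finset.sum_add_distrib,
        ← Finset.sum_mul]
    simp only [hG, hG']
    rw [hsum, hterm0]
    nlinarith [hkey]
  exact le_trans hGG (le_csSup hbddG ⟨ω, hωE, rfl⟩)

end MainAux

/-- A map agreeing with a W-coherent lower probability on `𝒜_C(pt)` extends
W-coherently to an additional conditional event `C|D` iff its value there lies between the
values of the inner event `(C|D)_*` and the outer event `(C|D)^*`. -/
theorem stmt_7 {Ω : Type*} [Nonempty Ω] (pt : Set (Set Ω)) (hpt : IsPartition pt)
    (μ ν : (Ω → ℝ) × Set Ω → ℝ)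
    (hμ : IsWCoherent (AC pt) μ)
    (C D : Set Ω) (h1 : (C ∩ D).Nonempty) (h2 : (Cᶜ ∩ D).Nonempty)
    (hag : ∀ p ∈ AC pt, ν p = μ p) :
    IsWCoherent (AC pt ∪ {(ind C, D)}) ν ↔
      (μ (innerCE pt C D) ≤ ν (ind C, D) ∧ ν (ind C, D) ≤ μ (outerCE pt C D)) := by
  classical
  have hDne : D.Nonempty := h1.mono Set.inter_subset_right
  have hBIne : (innerE pt (C ∩ D) ∪ outerE pt (Cᶜ ∩ D)).Nonempty :=
    (h2.mono (subset_outerE hpt _)).mono Set.subset_union_right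
  have hBOne : (outerE pt (C ∩ D) ∪ innerE pt (Cᶜ ∩ D)).Nonempty :=
    (h1.mono (subset_outerE hpt _)).mono Set.subset_union_left
  have hin : (ind (innerE pt (C ∩ D)), innerE pt (C ∩ D) ∪ outerE pt (Cᶜ ∩ D)) ∈ AC pt :=
    ⟨innerE pt (C ∩ D), innerE pt (C ∩ D) ∪ outerE pt (Cᶜ ∩ D), memA_innerE pt _,
      memA_union (memA_innerE pt _) (memA_outerE pt _), hBIne, rfl⟩
  have hout : (ind (outerE pt (C ∩ D)), outerE pt (C ∩ D) ∪ innerE pt (Cᶜ ∩ D)) ∈ AC pt :=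
    ⟨outerE pt (C ∩ D), outerE pt (C ∩ D) ∪ innerE pt (Cᶜ ∩ D), memA_outerE pt _,
      memA_union (memA_outerE pt _) (memA_innerE pt _), hBOne, rfl⟩
  have hinCE : innerCE pt C D = (ind (innerE pt (C ∩ D)),
      innerE pt (C ∩ D) ∪ outerE pt (Cᶜ ∩ D)) := rfl
  have houtCE : outerCE pt C D = (ind (outerE pt (C ∩ D)),
      outerE pt (C ∩ D) ∪ innerE pt (Cᶜ ∩ D)) := rfl
  constructor
  · intro hν
    have hCDm : (ind C, D) ∈ AC pt ∪ {(ind C, D)} := Or.inr rfl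
    constructor
    · have hmono := WCoh_mono hν (A := innerE pt (C ∩ D))
        (B := innerE pt (C ∩ D) ∪ outerE pt (Cᶜ ∩ D)) (C' := C) (D' := D)
        (Or.inl hin) hCDm hBIne
        (fun ω hω => innerE_subset pt (C ∩ D) hω.1)
        (fun ω hω => ⟨fun hx => hω.1 (innerE_subset pt (C ∩ D) hx).1,
          Or.inr (subset_outerE hpt _ hω)⟩)
        (WCoh_nonneg hν hCDm hDne)
        (WCoh_le_one hν (Or.inl hin) hBIne)
      rw [hinCE, ← hag _ hin]
      exact hmono
    · have hmono := WCoh_mono hν (A := C) (B := D) (C' := outerE pt (C ∩ D))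
        (D' := outerE pt (C ∩ D) ∪ innerE pt (Cᶜ ∩ D))
        hCDm (Or.inl hout) hDne
        (fun ω hω => ⟨subset_outerE hpt _ hω, Or.inl (subset_outerE hpt _ hω)⟩)
        (fun ω hω => ⟨(innerE_subset pt (Cᶜ ∩ D) (hω.2.resolve_left hω.1)).1,
          (innerE_subset pt (Cᶜ ∩ D) (hω.2.resolve_left hω.1)).2⟩)
        (WCoh_nonneg hν (Or.inl hout) hBOne)
        (WCoh_le_one hν hCDm hDne)
      rw [houtCE, ← hag _ hout]
      exact hmono
  · rintro ⟨hax, hxc⟩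
    rw [hinCE] at hax
    rw [houtCE] at hxc
    intro n X0 B0 X Bs s0 s hX0 hXs hs0 hs
    rcases le_or_gt 0 ((∑ i, if (X i, Bs i) = (ind C, D) then s i else 0) -
        (if (X0, B0) = (ind C, D) then s0 else 0)) with ht | ht
    · refine main_aux hpt μ ν hμ C D hDne hag (outerE pt (C ∩ D))
        (outerE pt (C ∩ D) ∪ innerE pt (Cᶜ ∩ D)) hout n X0 B0 X Bs s0 s hX0 hXs hs0 hs ?_
      intro e he ω' hω'
      obtain ⟨ω, hωe, hor, hle⟩ := key_outer hpt C D hxc he hω'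
      refine ⟨ω, hωe, hor, ?_⟩
      refine mul_nonpos_iff.mpr (Or.inl ⟨ht, ?_⟩)
      rw [gainTerm_apply, gainTerm_apply]
      exact sub_nonpos.mpr (by convert hle using 2; rfl)
    · refine main_aux hpt μ ν hμ C D hDne hag (innerE pt (C ∩ D))
        (innerE pt (C ∩ D) ∪ outerE pt (Cᶜ ∩ D)) hin n X0 B0 X Bs s0 s hX0 hXs hs0 hs ?_
      intro e he ω' hω'
      obtain ⟨ω, hωe, hor, hle⟩ := key_inner hpt C D hax he hω'
      refine ⟨ω, hωe, hor, ?_⟩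
      refine mul_nonpos_iff.mpr (Or.inr ⟨ht.le, ?_⟩)
      rw [gainTerm_apply, gainTerm_apply]
      exact sub_nonneg.mpr (by convert hle using 2; rfl)
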